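/- Let A be a 4×4 integer matrix whose upper-left 2×2 block is zero (i.e. A is metabolic with metabolizer spanned by the first two basis vectors), and suppose both A and A − Aᵀ are invertible over ℤ. Then there exist linearly independent vectors u, v ∈ ℤ⁴ with uᵀAu = 0, uᵀAv = 1, and vᵀAu = 0. -/

import Mathlib

open Matrix
theorem det_fin_four' (A : Matrix (Fin 4) (Fin 4) ℤ) (h00 : A 0 0 = 0) (h01 : A 0 1 = 0)
    (h10 : A 1 0 = 0) (h11 : A 1 1 = 0) :
    A.det = (A 0 2 * A 1 3 - A 0 3 * A 1 2) * (A 2 0 * A 3 1 - A 2 1 * A 3 0) := by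
  rw [Matrix.det_succ_row_zero]
  simp [Fin.sum_univ_succ, Matrix.det_fin_three, Fin.succAbove, h00, h01, h10, h11]
  ring

theorem exists_k' (a b : ℤ) (ha : a ≠ 0) : ∃ k : ℤ, (b + 2*a*k)^2 ≤ a^2 := by
  have hm0 : 0 < 2*|a| := by positivity
  have h1 : 0 ≤ b % (2*|a|) := Int.emod_nonneg b (by omega)
  have h2 : b % (2*|a|) < 2*|a| := Int.emod_lt_of_pos b hm0
  have hb : 2*|a| * (b / (2*|a|)) + b % (2*|a|) = b := Int.mul_ediv_add_emod b _
  rcases abs_choice a with h3 | h3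
  all_goals rw [h3] at h1 h2 hb
  all_goals rcases le_or_gt (b % (2*|a|)) |a| with h4 | h4 <;> rw [h3] at h4
  · refine ⟨-(b/(2*a)), ?_⟩
    have he : b + 2*a*(-(b/(2*a))) = b % (2*a) := by linear_combination -hb
    rw [he]; nlinarith [h1, h4]
  · refine ⟨-(b/(2*a)) - 1, ?_⟩
    have he : b + 2*a*(-(b/(2*a)) - 1) = b % (2*a) - 2*a := by linear_combination -hb
    rw [he]; nlinarith [h2, h4]
  · refine ⟨b/(2*(-a)), ?_⟩
    have he : b + 2*a*(b/(2*(-a))) = b % (2*(-a)) := by linear_combination -hb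
    rw [he]; nlinarith [h1, h4]
  · refine ⟨b/(2*(-a)) + 1, ?_⟩
    have he : b + 2*a*(b/(2*(-a)) + 1) = b % (2*(-a)) + 2*a := by linear_combination -hb
    rw [he]; nlinarith [h2, h4]

theorem rep' (n : ℕ) : ∀ a b c D : ℤ, (D = 5 ∨ D = -3) → a.natAbs ≤ n →
    b^2 - 4*a*c = D → ∃ x y e : ℤ, (e = 1 ∨ e = -1) ∧ a*x^2 + b*x*y + c*y^2 = e := by
  induction n using Nat.strong_induction_on with
  | _ n ih =>
    intro a b c D hD hn hdisc
    rcases eq_or_ne a 0 with rfl | ha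
    · exfalso
      rcases hD with rfl | rfl
      · have h5 : b^2 = 5 := by linarith
        have t1 : 4*b ≤ 9 := by nlinarith [sq_nonneg (b-2)]
        have t2 : -(9:ℤ) ≤ 4*b := by nlinarith [sq_nonneg (b+2)]
        have hb1 : -2 ≤ b ∧ b ≤ 2 := by omega
        nlinarith [mul_nonneg (by linarith : (0:ℤ) ≤ 2 - b) (by linarith : (0:ℤ) ≤ 2 + b)]
      · nlinarith [sq_nonneg b]
    · rcases eq_or_lt_of_le (show 1 ≤ a.natAbs by omega) with h1 | h1
      · have ha1 : a = 1 ∨ a = -1 := by rcases Int.natAbs_eq a with h | h <;> omega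
        exact ⟨1, 0, a, ha1, by ring⟩
      · obtain ⟨k, hk⟩ := exists_k' a b ha
        have hdisc' : (b + 2*a*k)^2 - 4*(a*k^2 + b*k + c)*a = D := by linear_combination hdisc
        have habs2 : (2:ℤ) ≤ |a| := by
          rw [Int.abs_eq_natAbs]; exact_mod_cast h1
        have haa : 4 ≤ a^2 := by nlinarith [sq_abs a, abs_nonneg a]
        have hcc : (a*k^2 + b*k + c)^2 < a^2 := by
          have h4 : 4*a*(a*k^2 + b*k + c) = (b + 2*a*k)^2 - D := by linear_combination -hdisc'
          rcases hD with rfl | rfl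
          · nlinarith [hk, sq_nonneg (b + 2*a*k), sq_nonneg a, sq_nonneg (a*k^2 + b*k + c)]
          · nlinarith [hk, sq_nonneg (b + 2*a*k), sq_nonneg a, sq_nonneg (a*k^2 + b*k + c)]
        have hlt : (a*k^2 + b*k + c).natAbs < a.natAbs := by
          by_contra hcon
          push_neg at hcon
          have : |a| ≤ |a*k^2 + b*k + c| := by
            rw [Int.abs_eq_natAbs, Int.abs_eq_natAbs]; exact_mod_cast hcon
          nlinarith [sq_abs a, sq_abs (a*k^2 + b*k + c), abs_nonneg a]
        obtain ⟨x, y, e, he, hxy⟩ :=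
          ih (a*k^2 + b*k + c).natAbs (lt_of_lt_of_le hlt hn)
            (a*k^2 + b*k + c) (b + 2*a*k) a D hD le_rfl hdisc'
        exact ⟨y + k*x, x, e, he, by linear_combination hxy⟩

theorem key2 (e f g h p q r s : ℤ)
    (hE : e*h - f*g = 1 ∨ e*h - f*g = -1)
    (hF : p*s - q*r = 1 ∨ p*s - q*r = -1)
    (hk : (e-p)*(h-s) - (f-r)*(g-q) = 1 ∨ (e-p)*(h-s) - (f-r)*(g-q) = -1) :
    ∃ x0 x1 w0 w1 : ℤ,
      x0*(e*w0 + f*w1) + x1*(g*w0 + h*w1) = 1 ∧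
      w0*(p*x0 + q*x1) + w1*(r*x0 + s*x1) = 0 := by
  have key : (p*h - q*f + r*g - s*e)^2 - 4*((p*g - q*e))*((r*h - s*f)) =
      ((e*h - f*g) + (p*s - q*r) - ((e-p)*(h-s) - (f-r)*(g-q)))^2
        - 4*(e*h - f*g)*(p*s - q*r) := by ring
  have hD : ((p*h - q*f + r*g - s*e)^2 - 4*((p*g - q*e))*((r*h - s*f)) = 5) ∨
      ((p*h - q*f + r*g - s*e)^2 - 4*((p*g - q*e))*((r*h - s*f)) = -3) := by
    rcases hE with h1 | h1 <;> rcases hF with h2 | h2 <;> rcases hk with h3 | h3 <;>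
      rw [h1, h2, h3] at key <;> norm_num at key <;> simp [key]
  obtain ⟨w0, w1, ε, hε, hQ⟩ :=
    rep' (p*g - q*e).natAbs (p*g - q*e) (p*h - q*f + r*g - s*e) (r*h - s*f) _
      (by rcases hD with h | h <;> simp [h]) le_rfl rfl
  have hε2 : ε * ε = 1 := by rcases hε with rfl | rfl <;> norm_num
  refine ⟨ε * -(q*w0 + s*w1), ε * (p*w0 + r*w1), w0, w1, ?_, by ring⟩
  linear_combination ε * hQ + hε2
theorem stmt6 (A : Matrix (Fin 4) (Fin 4) ℤ)
    (hmeta : ∀ i j : Fin 4, i.val < 2 → j.val < 2 → A i j = 0)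
    (hA : IsUnit A.det) (hA' : IsUnit (A - Aᵀ).det) :
    ∃ u v : Fin 4 → ℤ, LinearIndependent ℤ ![u, v] ∧
      u ⬝ᵥ A *ᵥ u = 0 ∧ u ⬝ᵥ A *ᵥ v = 1 ∧ v ⬝ᵥ A *ᵥ u = 0 := by
  have h00 : A 0 0 = 0 := hmeta 0 0 (by norm_num) (by norm_num)
  have h01 : A 0 1 = 0 := hmeta 0 1 (by norm_num) (by norm_num)
  have h10 : A 1 0 = 0 := hmeta 1 0 (by norm_num) (by norm_num)
  have h11 : A 1 1 = 0 := hmeta 1 1 (by norm_num) (by norm_num)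
  rw [det_fin_four' A h00 h01 h10 h11] at hA
  have hE : A 0 2 * A 1 3 - A 0 3 * A 1 2 = 1 ∨ A 0 2 * A 1 3 - A 0 3 * A 1 2 = -1 :=
    Int.isUnit_iff.mp (isUnit_of_mul_isUnit_left hA)
  have hF : A 2 0 * A 3 1 - A 2 1 * A 3 0 = 1 ∨ A 2 0 * A 3 1 - A 2 1 * A 3 0 = -1 :=
    Int.isUnit_iff.mp (isUnit_of_mul_isUnit_right hA)
  have hB00 : (A - Aᵀ) 0 0 = 0 := by simp [Matrix.sub_apply, Matrix.transpose_apply]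
  have hB01 : (A - Aᵀ) 0 1 = 0 := by simp [Matrix.sub_apply, Matrix.transpose_apply, h01, h10]
  have hB10 : (A - Aᵀ) 1 0 = 0 := by simp [Matrix.sub_apply, Matrix.transpose_apply, h01, h10]
  have hB11 : (A - Aᵀ) 1 1 = 0 := by simp [Matrix.sub_apply, Matrix.transpose_apply]
  rw [det_fin_four' (A - Aᵀ) hB00 hB01 hB10 hB11] at hA'
  simp only [Matrix.sub_apply, Matrix.transpose_apply] at hA'
  have hκ : (A 0 2 - A 2 0) * (A 1 3 - A 3 1) - (A 0 3 - A 3 0) * (A 1 2 - A 2 1) = 1 ∨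
      (A 0 2 - A 2 0) * (A 1 3 - A 3 1) - (A 0 3 - A 3 0) * (A 1 2 - A 2 1) = -1 :=
    Int.isUnit_iff.mp (isUnit_of_mul_isUnit_left hA')
  obtain ⟨x0, x1, w0, w1, h1, h2⟩ :=
    key2 (A 0 2) (A 0 3) (A 1 2) (A 1 3) (A 2 0) (A 2 1) (A 3 0) (A 3 1) hE hF hκ
  set u : Fin 4 → ℤ := ![x0, x1, 0, 0] with hu_def
  set v : Fin 4 → ℤ := ![0, 0, w0, w1] with hv_def
  have hu : u ⬝ᵥ A *ᵥ u = 0 := by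
    simp [hu_def, dotProduct, Matrix.mulVec, Fin.sum_univ_four, h00, h01, h10, h11]
  have huv : u ⬝ᵥ A *ᵥ v = 1 := by
    simp [hu_def, hv_def, dotProduct, Matrix.mulVec, Fin.sum_univ_four]
    linear_combination h1
  have hvu : v ⬝ᵥ A *ᵥ u = 0 := by
    simp [hu_def, hv_def, dotProduct, Matrix.mulVec, Fin.sum_univ_four]
    linear_combination h2
  refine ⟨u, v, LinearIndependent.pair_iff.mpr ?_, hu, huv, hvu⟩
  intro s t hst
  have h0 : u ⬝ᵥ A *ᵥ (s • u + t • v) = 0 := by rw [hst]; simp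
  rw [Matrix.mulVec_add, Matrix.mulVec_smul, Matrix.mulVec_smul, dotProduct_add,
    dotProduct_smul, dotProduct_smul, hu, huv] at h0
  have ht : t = 0 := by simpa using h0
  have hu0 : u ≠ 0 := by
    intro hh
    rw [hh] at huv
    simp at huv
  have hsu : s • u = 0 := by
    rw [ht] at hst
    simpa using hst
  rcases smul_eq_zero.mp hsu with h | h
  · exact ⟨h, ht⟩
  · exact absurd h hu0
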